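/- Under Assumption H with β₁ = 0, and with μ₀, μ₊, μ₋, ν± as in the context, there exist ε₂ ∈ (0,ε₁] and C > 0 such that for all |ε| < ε₂: |ν₊(ε) + (2/T₁)(β₃ − β₂T₂/T₁)ε⁴| ≤ C|ε|⁵ and |ν₋(ε) − (2/T₁)(β₃ − β₂T₂/T₁)ε⁴| ≤ C|ε|⁵; that is, ν±(ε) = ∓(2/T₁)(β₃ − β₂T₂/T₁)ε⁴ + O(ε⁵). -/

import Mathlib

open Matrix Set

noncomputable def Jmat : Matrix (Fin 2) (Fin 2) ℂ := !![-Complex.I, 0; 0, Complex.I]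

noncomputable def Bmat (a b c : ℝ) : Matrix (Fin 2) (Fin 2) ℂ :=
  !![(a : ℂ), Complex.I * (b : ℂ); -Complex.I * (b : ℂ), (c : ℂ)]

/-- The 2×2 Hamiltonian and reversible matrix `L = J ⬝ B`. -/
noncomputable def Lmat (a b c : ℝ) : Matrix (Fin 2) (Fin 2) ℂ := Jmat * Bmat a b c

/-- `l` is an eigenvalue of `M`, i.e. a root of its characteristic polynomial. -/
def IsEig (M : Matrix (Fin 2) (Fin 2) ℂ) (l : ℂ) : Prop := (Matrix.charpoly M).IsRoot l

/-- Assumption H: expansions of the real analytic entries `α, β, γ` of the matrix `B(μ,ε)`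
around `(μ̄, 0)`, with `T₁ = α₁ + γ₁ > 0`. -/
structure AssumptionH (μb ωs δ₀ ε₀ : ℝ) (α β γ : ℝ → ℝ → ℝ)
    (α₁ α₂ β₁ β₂ β₃ γ₁ γ₂ : ℝ) : Prop where
  hδ₀ : 0 < δ₀
  hε₀ : 0 < ε₀
  hα_an : AnalyticOnNhd ℝ (fun p : ℝ × ℝ => α p.1 p.2)
    (Ioo (μb - δ₀) (μb + δ₀) ×ˢ Ioo (-ε₀) ε₀)
  hβ_an : AnalyticOnNhd ℝ (fun p : ℝ × ℝ => β p.1 p.2)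
    (Ioo (μb - δ₀) (μb + δ₀) ×ˢ Ioo (-ε₀) ε₀)
  hγ_an : AnalyticOnNhd ℝ (fun p : ℝ × ℝ => γ p.1 p.2)
    (Ioo (μb - δ₀) (μb + δ₀) ×ˢ Ioo (-ε₀) ε₀)
  hT₁ : 0 < α₁ + γ₁
  hexp : ∃ α₀ γ₀ : ℝ → ℝ, ∃ d ∈ Ioc (0 : ℝ) δ₀, ∃ e ∈ Ioc (0 : ℝ) ε₀, ∃ C : ℝ, 0 < C ∧
    AnalyticOnNhd ℝ α₀ (Ioo (-d) d) ∧ AnalyticOnNhd ℝ γ₀ (Ioo (-d) d) ∧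
    ∀ δ ε : ℝ, |δ| < d → |ε| < e →
      |α (μb + δ) ε - (-(α₀ δ) + α₂ * ε ^ 2)| ≤ C * (|ε| ^ 3 + |δ| * ε ^ 2 + δ ^ 2 * |ε|) ∧
      |β (μb + δ) ε - (β₁ * ε ^ 2 + β₂ * δ * ε ^ 2 + β₃ * ε ^ 4)| ≤
        C * (|ε| ^ 5 + |δ| * |ε| ^ 3 + δ ^ 2 * ε ^ 2 + |δ| ^ 3 * |ε|) ∧
      |γ (μb + δ) ε - (γ₀ δ + γ₂ * ε ^ 2)| ≤ C * (|ε| ^ 3 + |δ| * ε ^ 2 + δ ^ 2 * |ε|) ∧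
      |α₀ δ - (ωs - α₁ * δ)| ≤ C * δ ^ 2 ∧
      |γ₀ δ - (ωs + γ₁ * δ)| ≤ C * δ ^ 2

/-- The graphs of the real analytic functions `μ₀, μ₊, μ₋` are exactly the zero sets of
`T = α + γ`, `d₊ = T + 2β`, `d₋ = T - 2β` in `(μ̄-δ₀,μ̄+δ₀) × (-ε₁,ε₁)`, with the sign
of these functions positive above the respective graph and negative below it. -/
structure ZeroCurves (μb δ₀ : ℝ) (α β γ : ℝ → ℝ → ℝ) (ε₁ : ℝ)
    (μ₀ μp μm : ℝ → ℝ) : Prop where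
  hμ₀_an : AnalyticOnNhd ℝ μ₀ (Ioo (-ε₁) ε₁)
  hμp_an : AnalyticOnNhd ℝ μp (Ioo (-ε₁) ε₁)
  hμm_an : AnalyticOnNhd ℝ μm (Ioo (-ε₁) ε₁)
  hmaps₀ : ∀ ε ∈ Ioo (-ε₁) ε₁, μ₀ ε ∈ Ioo (μb - δ₀) (μb + δ₀)
  hmapsp : ∀ ε ∈ Ioo (-ε₁) ε₁, μp ε ∈ Ioo (μb - δ₀) (μb + δ₀)
  hmapsm : ∀ ε ∈ Ioo (-ε₁) ε₁, μm ε ∈ Ioo (μb - δ₀) (μb + δ₀)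
  hT : ∀ μ ∈ Ioo (μb - δ₀) (μb + δ₀), ∀ ε ∈ Ioo (-ε₁) ε₁,
    (α μ ε + γ μ ε = 0 ↔ μ = μ₀ ε) ∧
    (μ₀ ε < μ → 0 < α μ ε + γ μ ε) ∧ (μ < μ₀ ε → α μ ε + γ μ ε < 0)
  hdp : ∀ μ ∈ Ioo (μb - δ₀) (μb + δ₀), ∀ ε ∈ Ioo (-ε₁) ε₁,
    (α μ ε + γ μ ε + 2 * β μ ε = 0 ↔ μ = μp ε) ∧
    (μp ε < μ → 0 < α μ ε + γ μ ε + 2 * β μ ε) ∧ (μ < μp ε → α μ ε + γ μ ε + 2 * β μ ε < 0)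
  hdm : ∀ μ ∈ Ioo (μb - δ₀) (μb + δ₀), ∀ ε ∈ Ioo (-ε₁) ε₁,
    (α μ ε + γ μ ε - 2 * β μ ε = 0 ↔ μ = μm ε) ∧
    (μm ε < μ → 0 < α μ ε + γ μ ε - 2 * β μ ε) ∧ (μ < μm ε → α μ ε + γ μ ε - 2 * β μ ε < 0)


set_option maxHeartbeats 1000000


lemma aux_key (F : ℝ × ℝ → ℝ) (T1 C d : ℝ) (hC : 0 ≤ C) (hd : 0 < d)
    (hF : ∀ p ∈ Metric.ball (0 : ℝ × ℝ) d, AnalyticAt ℝ F p)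
    (hquad : ∀ δ : ℝ, |δ| < d → |F (δ, 0) - T1 * δ| ≤ C * δ ^ 2) :
    ∃ r, 0 < r ∧ r ≤ d ∧ ∃ L, 0 < L ∧ ∀ δ δ' ε : ℝ, |δ| < r → |δ'| < r → |ε| < r →
      |F (δ, ε) - F (δ', ε) - T1 * (δ - δ')| ≤ L * (|δ| + |δ'| + |ε|) * |δ - δ'| := by
  have h0mem : (0 : ℝ × ℝ) ∈ Metric.ball (0 : ℝ × ℝ) d := by simpa using hd
  have hF0 : AnalyticAt ℝ F 0 := hF 0 h0mem
  have hcd : ContDiffAt ℝ 2 F 0 := hF0.contDiffAt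
  have hcd1 : ContDiffAt ℝ 1 (fderiv ℝ F) 0 := hcd.fderiv_right (by norm_num)
  obtain ⟨K, t, ht, hlip⟩ := hcd1.exists_lipschitzOnWith
  obtain ⟨r', hr', hball⟩ := Metric.mem_nhds_iff.mp ht
  set Df0 := fderiv ℝ F 0 with hDf0
  have hdiff : HasFDerivAt F Df0 0 := hF0.differentiableAt.hasFDerivAt
  have hcurve : HasDerivAt (fun δ : ℝ => ((δ : ℝ), (0 : ℝ))) ((1 : ℝ), (0 : ℝ)) 0 :=
    (hasDerivAt_id (0:ℝ)).prodMk (hasDerivAt_const (0:ℝ) (0:ℝ))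
  have hcomp : HasDerivAt (fun δ : ℝ => F (δ, 0)) (Df0 (1, 0)) 0 := by
    have := HasFDerivAt.comp_hasDerivAt (l := F)
      (f := fun δ : ℝ => ((δ : ℝ), (0 : ℝ))) 0 (by exact hdiff) hcurve
    exact this
  have hF00 : F (0, 0) = 0 := by
    have h := hquad 0 (by simpa using hd)
    rw [mul_zero, sub_zero] at h
    norm_num at h
    exact h
  have hT1der : HasDerivAt (fun δ : ℝ => F (δ, 0)) T1 0 := by
    rw [hasDerivAt_iff_isLittleO]
    rw [Asymptotics.isLittleO_iff]
    intro c hc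
    have hpos : (0:ℝ) < min d (c / (C + 1)) := lt_min hd (div_pos hc (by linarith))
    have hev : ∀ᶠ δ : ℝ in nhds 0, |δ| < min d (c / (C + 1)) := by
      filter_upwards [Metric.ball_mem_nhds (0:ℝ) hpos] with δ hδ
      simpa [Real.dist_eq] using hδ
    filter_upwards [hev] with δ hδ
    have h1 : |F (δ, 0) - T1 * δ| ≤ C * δ ^ 2 := hquad δ (lt_of_lt_of_le hδ (min_le_left _ _))
    have h2 : |δ| ≤ c / (C + 1) := le_of_lt (lt_of_lt_of_le hδ (min_le_right _ _))
    have h3 : C * δ ^ 2 ≤ c * |δ| := by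
      have hsq : δ ^ 2 = |δ| * |δ| := by rw [← sq_abs δ, pow_two]
      rw [hsq]
      have hCd : C * |δ| ≤ c := by
        have hC1 : (0:ℝ) < C + 1 := by linarith
        have : C * |δ| ≤ C * (c / (C+1)) := by nlinarith [abs_nonneg δ]
        have h4 : C * (c / (C+1)) ≤ c := by
          rw [mul_div_assoc', div_le_iff₀ hC1]; nlinarith
        linarith
      nlinarith [abs_nonneg δ]
    simp only [Real.norm_eq_abs, sub_zero, smul_eq_mul, hF00]
    calc |F (δ, 0) - δ * T1| = |F (δ, 0) - T1 * δ| := by rw [mul_comm]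
    _ ≤ C * δ ^ 2 := h1
    _ ≤ c * |δ| := h3
  have hDfT1 : Df0 (1, 0) = T1 := hcomp.unique hT1der
  set r := min (r'/2) (d/2) with hr
  have hr0 : 0 < r := by positivity
  refine ⟨r, hr0, by simp [hr]; right; linarith, (K : ℝ) + 1, by positivity, ?_⟩
  intro δ δ' ε hδ hδ' hε
  set x : ℝ × ℝ := (δ', ε) with hx
  set y : ℝ × ℝ := (δ, ε) with hy
  have hrr' : r < r' := by
    calc r ≤ r'/2 := min_le_left _ _
    _ < r' := by linarith
  have hrd : r < d := by
    calc r ≤ d/2 := min_le_right _ _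
    _ < d := by linarith
  set ρ := max ‖x‖ ‖y‖ with hρ
  have hxn : ‖x‖ = max |δ'| |ε| := by rw [Prod.norm_def]; rfl
  have hyn : ‖y‖ = max |δ| |ε| := by rw [Prod.norm_def]; rfl
  have hρlt : ρ < r := by
    rw [hρ, hxn, hyn]
    simp only [max_lt_iff]
    exact ⟨⟨hδ', hε⟩, hδ, hε⟩
  have hρsum : ρ ≤ |δ| + |δ'| + |ε| := by
    rw [hρ, hxn, hyn]
    simp only [max_le_iff]
    refine ⟨⟨?_, ?_⟩, ?_, ?_⟩ <;> linarith [abs_nonneg δ, abs_nonneg δ', abs_nonneg ε]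
  have hρ0 : 0 ≤ ρ := le_trans (norm_nonneg x) (le_max_left _ _)
  have hsub : Metric.closedBall (0 : ℝ × ℝ) ρ ⊆ Metric.ball (0 : ℝ × ℝ) r := by
    intro p hp
    rw [Metric.mem_closedBall] at hp
    rw [Metric.mem_ball]
    exact lt_of_le_of_lt hp hρlt
  have hsubd : Metric.closedBall (0 : ℝ × ℝ) ρ ⊆ Metric.ball (0 : ℝ × ℝ) d :=
    hsub.trans (Metric.ball_subset_ball hrd.le)
  have hsubr' : Metric.closedBall (0 : ℝ × ℝ) ρ ⊆ t :=
    (hsub.trans (Metric.ball_subset_ball hrr'.le)).trans hball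
  have hxmem : x ∈ Metric.closedBall (0 : ℝ × ℝ) ρ := by
    rw [Metric.mem_closedBall, dist_zero_right]
    exact le_max_left _ _
  have hymem : y ∈ Metric.closedBall (0 : ℝ × ℝ) ρ := by
    rw [Metric.mem_closedBall, dist_zero_right]
    exact le_max_right _ _
  have h0t : (0 : ℝ × ℝ) ∈ t := hball (Metric.mem_ball_self hr')
  have hder : ∀ p ∈ Metric.closedBall (0 : ℝ × ℝ) ρ,
      HasFDerivWithinAt F (fderiv ℝ F p) (Metric.closedBall (0 : ℝ × ℝ) ρ) p := fun p hp =>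
    ((hF p (hsubd hp)).differentiableAt.hasFDerivAt).hasFDerivWithinAt
  have hbound : ∀ p ∈ Metric.closedBall (0 : ℝ × ℝ) ρ,
      ‖fderiv ℝ F p - Df0‖ ≤ (K : ℝ) * (|δ| + |δ'| + |ε|) := by
    intro p hp
    have h1 : dist (fderiv ℝ F p) (fderiv ℝ F 0) ≤ (K : ℝ) * dist p 0 :=
      hlip.dist_le_mul p (hsubr' hp) 0 h0t
    rw [dist_eq_norm, dist_zero_right] at h1
    have h2 : ‖p‖ ≤ ρ := by rw [← dist_zero_right]; exact Metric.mem_closedBall.mp hp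
    calc ‖fderiv ℝ F p - Df0‖ ≤ (K : ℝ) * ‖p‖ := h1
    _ ≤ (K : ℝ) * (|δ| + |δ'| + |ε|) := by
        have : (0:ℝ) ≤ (K:ℝ) := K.2
        nlinarith [le_trans h2 hρsum]
  have hmvt := Convex.norm_image_sub_le_of_norm_hasFDerivWithin_le' hder hbound
    (convex_closedBall _ _) hxmem hymem
  have hyx : y - x = (δ - δ', 0) := by
    rw [hx, hy, Prod.mk_sub_mk]; norm_num
  have hφ : Df0 (y - x) = T1 * (δ - δ') := by
    rw [hyx]
    have : ((δ - δ' : ℝ), (0:ℝ)) = (δ - δ') • ((1:ℝ), (0:ℝ)) := by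
      simp [Prod.smul_mk]
    rw [this, _root_.map_smul, hDfT1, smul_eq_mul, mul_comm]
  have hnyx : ‖y - x‖ = |δ - δ'| := by
    rw [hyx, Prod.norm_def]
    simp [Real.norm_eq_abs]
  rw [hφ, hnyx] at hmvt
  have : ‖F y - F x - T1 * (δ - δ')‖ = |F (δ, ε) - F (δ', ε) - T1 * (δ - δ')| := by
    rw [hx, hy]; rfl
  rw [this] at hmvt
  calc |F (δ, ε) - F (δ', ε) - T1 * (δ - δ')| ≤ (K:ℝ) * (|δ| + |δ'| + |ε|) * |δ - δ'| := hmvt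
  _ ≤ ((K:ℝ) + 1) * (|δ| + |δ'| + |ε|) * |δ - δ'| := by
      have h1 : (0:ℝ) ≤ |δ| + |δ'| + |ε| := by positivity
      have h2 : (0:ℝ) ≤ |δ - δ'| := abs_nonneg _
      nlinarith


lemma aux_est (T1 T2 b2 b3 CF CB L ρ A C2 C3 L' C4 C5 C6 : ℝ)
    (hT1 : 0 < T1) (hCF : 0 ≤ CF) (hCB : 0 ≤ CB) (hL : 0 ≤ L)
    (hρ0 : 0 < ρ) (hρ1 : ρ ≤ 1)
    (hA : A = 2/T1 * (|T2| + CF + 2 * |b3| + 2*CB))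
    (hC2 : C2 = CF * (2*A^2 + 1 + A))
    (hC3 : C3 = 2*CB*(1 + A + A^2 + A^3))
    (hL' : L' = L*(2*A+1))
    (hC4 : C4 = 2/T1 * (2 * |b2| * A + 2 * |b3| + C3))
    (hC5 : C5 = C2/T1 + C4)
    (hC6 : C6 = L'*C4 + C3 + 2 * |b2| * C5)
    (habs1 : (3*CF + 2 * |b2| + 6*CB)*ρ ≤ T1/2)
    (habs2 : L'*ρ ≤ T1/2)
    (σ δ0 δp ε Fp Bp : ℝ) (hσ : |σ| = 1)
    (hδ0 : |δ0| ≤ ρ) (hδp : |δp| ≤ ρ) (hε : |ε| ≤ ρ)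
    (hzero : Fp + σ * (2 * Bp) = 0)
    (hFpnear : |Fp - (T1*δp + T2*ε^2)| ≤ CF*(δp^2 + |ε|^3 + |δp| * ε^2 + δp^2 * |ε|))
    (hF0near : |(0:ℝ) - (T1*δ0 + T2*ε^2)| ≤ CF*(δ0^2 + |ε|^3 + |δ0| * ε^2 + δ0^2 * |ε|))
    (hBnear : |Bp - (b2*δp*ε^2 + b3*ε^4)| ≤ CB*(|ε|^5 + |δp| * |ε|^3 + δp^2*ε^2 + |δp|^3 * |ε|))
    (hlip : |Fp - 0 - T1*(δp - δ0)| ≤ L*(|δp| + |δ0| + |ε|) * |δp - δ0|) :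
    |(δp - δ0) + σ * (2 / T1 * (b3 - b2 * T2 / T1)) * ε ^ 4| ≤ C6 / T1 * |ε| ^ 5 := by
  have ha0 : 0 ≤ |δ0| := abs_nonneg _
  have hap : 0 ≤ |δp| := abs_nonneg _
  have haε : 0 ≤ |ε| := abs_nonneg _
  have haν : 0 ≤ |δp - δ0| := abs_nonneg _
  have haε1 : |ε| ≤ 1 := le_trans hε hρ1
  have he2 : ε^2 = |ε|^2 := (sq_abs ε).symm
  have he4 : ε^4 = |ε|^4 := by
    rw [pow_abs]; exact (abs_of_nonneg (by positivity)).symm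
  have hd02 : δ0^2 = |δ0|^2 := (sq_abs δ0).symm
  have hdp2 : δp^2 = |δp|^2 := (sq_abs δp).symm
  have hb2 : (0:ℝ) ≤ |b2| := abs_nonneg _
  have hb3 : (0:ℝ) ≤ |b3| := abs_nonneg _
  have hT2 : (0:ℝ) ≤ |T2| := abs_nonneg _
  have hA0 : 0 ≤ A := by rw [hA]; positivity
  have hC30 : 0 ≤ C3 := by rw [hC3]; positivity
  have hL'0 : 0 ≤ L' := by rw [hL']; positivity
  have hC20 : 0 ≤ C2 := by rw [hC2]; positivity
  have hC40 : 0 ≤ C4 := by rw [hC4]; positivity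
  have hC50 : 0 ≤ C5 := by rw [hC5]; positivity
  -- small monomial facts
  have hρa : |ε|^2 ≤ ρ := by nlinarith only [hε, haε1, haε, hρ0.le]
  have he2le1 : |ε|^2 ≤ |ε| := by nlinarith only [haε1, haε]
  have he3le2 : |ε|^3 ≤ |ε|^2 := by nlinarith only [haε1, sq_nonneg (|ε|)]
  have he4le3 : |ε|^4 ≤ |ε|^3 := by nlinarith only [haε1, pow_nonneg (abs_nonneg ε) 3]
  have he5le4 : |ε|^5 ≤ |ε|^4 := by nlinarith only [haε1, pow_nonneg (abs_nonneg ε) 4]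
  have he6le5 : |ε|^6 ≤ |ε|^5 := by nlinarith only [haε1, pow_nonneg (abs_nonneg ε) 5]
  have haε2le1 : |ε|^2 ≤ 1 := le_trans he2le1 haε1
  have he7le5 : |ε|^7 ≤ |ε|^5 := by nlinarith only [pow_nonneg (abs_nonneg ε) 5, haε2le1]
  have he4le2 : |ε|^4 ≤ |ε|^2 := le_trans he4le3 he3le2
  have he5le2 : |ε|^5 ≤ |ε|^2 := le_trans he5le4 he4le2
  have m1 : |δ0|^2 ≤ ρ* |δ0| := by nlinarith only [ha0, hδ0]
  have m2 : |δ0| * |ε|^2 ≤ ρ* |δ0| := by nlinarith only [hρa, ha0]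
  have m3 : |δ0|^2* |ε| ≤ ρ* |δ0| := by nlinarith only [m1, haε1, sq_nonneg (|δ0|)]
  have n1 : |δp|^2 ≤ ρ* |δp| := by nlinarith only [hap, hδp]
  have n2 : |δp| * |ε|^2 ≤ ρ* |δp| := by nlinarith only [hρa, hap]
  have n3 : |δp|^2* |ε| ≤ ρ* |δp| := by nlinarith only [n1, haε1, sq_nonneg (|δp|)]
  have n4 : |δp| * |ε|^3 ≤ ρ* |δp| := by nlinarith only [he3le2, hρa, hap, n2, pow_nonneg (abs_nonneg ε) 3]
  have n5 : |δp|^2* |ε|^2 ≤ ρ* |δp| := by nlinarith only [n1, haε2le1, sq_nonneg (|δp|), hρ0.le, hap, hδp]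
  have n6 : |δp|^3* |ε| ≤ ρ* |δp| := by
    have h1 : |δp|^3* |ε| ≤ |δp|^2 := by
      nlinarith only [hδp, hρ1, haε1, hap, haε, sq_nonneg (|δp|), pow_nonneg (abs_nonneg δp) 3]
    linarith [n1, h1]
  -- normalized bounds
  have B1 : |T1*δ0 + T2*ε^2| ≤ CF*(|δ0|^2 + |ε|^3 + |δ0| * |ε|^2 + |δ0|^2* |ε|) := by
    have h := hF0near
    rw [zero_sub, abs_neg] at h
    calc |T1*δ0 + T2*ε^2| ≤ CF*(δ0^2 + |ε|^3 + |δ0| * ε^2 + δ0^2 * |ε|) := h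
    _ = CF*(|δ0|^2 + |ε|^3 + |δ0| * |ε|^2 + |δ0|^2* |ε|) := by rw [he2, hd02]
  have B2 : |Fp - (T1*δp + T2*ε^2)| ≤ CF*(|δp|^2 + |ε|^3 + |δp| * |ε|^2 + |δp|^2* |ε|) := by
    calc |Fp - (T1*δp + T2*ε^2)| ≤ CF*(δp^2 + |ε|^3 + |δp| * ε^2 + δp^2 * |ε|) := hFpnear
    _ = CF*(|δp|^2 + |ε|^3 + |δp| * |ε|^2 + |δp|^2* |ε|) := by rw [he2, hdp2]
  have B3 : |Bp - (b2*δp*ε^2 + b3*ε^4)| ≤ CB*(|ε|^5 + |δp| * |ε|^3 + |δp|^2* |ε|^2 + |δp|^3* |ε|) := by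
    calc |Bp - (b2*δp*ε^2 + b3*ε^4)| ≤ CB*(|ε|^5 + |δp| * |ε|^3 + δp^2*ε^2 + |δp|^3 * |ε|) :=
      hBnear
    _ = CB*(|ε|^5 + |δp| * |ε|^3 + |δp|^2* |ε|^2 + |δp|^3* |ε|) := by rw [he2, hdp2]
  have hFp2B : |Fp| = 2 * |Bp| := by
    have e : Fp = -(σ*(2*Bp)) := by linarith
    rw [e, abs_neg, abs_mul, hσ, one_mul, abs_mul]
    norm_num
  -- step s1 : |δ0| ≤ A * |ε|^2
  have habs1' : 3*CF*ρ ≤ T1/2 := by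
    nlinarith only [habs1, mul_nonneg hb2 hρ0.le, mul_nonneg hCB hρ0.le]
  have t1 : T1* |δ0| ≤ |T1*δ0 + T2*ε^2| + |T2| * |ε|^2 := by
    have h := abs_sub_abs_le_abs_sub (T1*δ0) (-(T2*ε^2))
    rw [sub_neg_eq_add, abs_neg, abs_mul, abs_mul, abs_of_pos hT1, abs_pow] at h
    linarith
  have s1' : T1* |δ0| - T1/2* |δ0| ≤ (|T2|+CF)* |ε|^2 := by
    nlinarith only [t1, B1, mul_le_mul_of_nonneg_left m1 hCF, mul_le_mul_of_nonneg_left m2 hCF,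
      mul_le_mul_of_nonneg_left m3 hCF, mul_le_mul_of_nonneg_left he3le2 hCF,
      mul_le_mul_of_nonneg_right habs1' ha0]
  have s1 : |δ0| ≤ A* |ε|^2 := by
    have hTA : T1*(A* |ε|^2) = 2*(|T2| + CF + 2 * |b3| + 2*CB)* |ε|^2 := by
      rw [hA]; field_simp; try ring
    have h2 : T1* |δ0| ≤ T1*(A* |ε|^2) := by
      rw [hTA]
      nlinarith only [s1', mul_nonneg hb3 (pow_nonneg (abs_nonneg ε) 2), mul_nonneg hCB (pow_nonneg (abs_nonneg ε) 2)]
    exact le_of_mul_le_mul_left h2 hT1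
  -- step s2 : |δp| ≤ A * |ε|^2
  have t2 : T1* |δp| ≤ |Fp - (T1*δp + T2*ε^2)| + |Fp| + |T2| * |ε|^2 := by
    have h1 := abs_add_le (-(Fp - (T1*δp + T2*ε^2)) + Fp) (-(T2*ε^2))
    have h2 := abs_add_le (-(Fp - (T1*δp + T2*ε^2))) Fp
    have e : (-(Fp - (T1*δp + T2*ε^2)) + Fp) + -(T2*ε^2) = T1*δp := by ring
    rw [e] at h1
    rw [abs_neg] at h1 h2
    have e2 : |T1*δp| = T1* |δp| := by rw [abs_mul, abs_of_pos hT1]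
    have e3 : |T2*ε^2| = |T2| * |ε|^2 := by rw [abs_mul, abs_pow]
    rw [e2, e3] at h1
    linarith
  have hBp : |Bp| ≤ |b2| * |δp| * |ε|^2 + |b3| * |ε|^4 + CB*(|ε|^5 + |δp| * |ε|^3 + |δp|^2* |ε|^2 + |δp|^3* |ε|) := by
    have hX : |b2*δp*ε^2 + b3*ε^4| ≤ |b2| * |δp| * |ε|^2 + |b3| * |ε|^4 := by
      calc |b2*δp*ε^2 + b3*ε^4| ≤ |b2*δp*ε^2| + |b3*ε^4| := abs_add_le _ _
      _ = |b2| * |δp| * |ε|^2 + |b3| * |ε|^4 := by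
          rw [abs_mul, abs_mul, abs_mul, abs_pow, abs_pow]
    have h := abs_add_le (Bp - (b2*δp*ε^2 + b3*ε^4)) (b2*δp*ε^2 + b3*ε^4)
    rw [sub_add_cancel] at h
    linarith [B3]
  have s2' : T1* |δp| - T1/2* |δp| ≤ (|T2| + CF + 2 * |b3| + 2*CB)* |ε|^2 := by
    nlinarith only [t2, B2, hFp2B, hBp,
      mul_le_mul_of_nonneg_left n1 hCF, mul_le_mul_of_nonneg_left n2 hCF,
      mul_le_mul_of_nonneg_left n3 hCF, mul_le_mul_of_nonneg_left he3le2 hCF,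
      mul_le_mul_of_nonneg_left n2 hb2, mul_le_mul_of_nonneg_left he4le2 hb3,
      mul_le_mul_of_nonneg_left he5le2 hCB, mul_le_mul_of_nonneg_left n4 hCB,
      mul_le_mul_of_nonneg_left n5 hCB, mul_le_mul_of_nonneg_left n6 hCB,
      mul_le_mul_of_nonneg_right habs1 hap]
  have s2 : |δp| ≤ A* |ε|^2 := by
    have hTA : T1*(A* |ε|^2) = 2*(|T2| + CF + 2 * |b3| + 2*CB)* |ε|^2 := by
      rw [hA]; field_simp; try ring
    have h2 : T1* |δp| ≤ T1*(A* |ε|^2) := by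
      rw [hTA]; linarith [s2']
    exact le_of_mul_le_mul_left h2 hT1
  -- step s3
  have q0sq : |δ0|^2 ≤ A^2* |ε|^4 := by
    nlinarith only [mul_le_mul s1 s1 ha0 (mul_nonneg hA0 (pow_nonneg (abs_nonneg ε) 2))]
  have s3 : |δ0 + T2/T1*ε^2| ≤ C2/T1* |ε|^3 := by
    have e1 : |T1*(δ0 + T2/T1*ε^2)| = T1 * |δ0 + T2/T1*ε^2| := by
      rw [abs_mul, abs_of_pos hT1]
    have e2 : T1*(δ0 + T2/T1*ε^2) = T1*δ0 + T2*ε^2 := by field_simp; try ring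
    have inner : |δ0|^2 + |ε|^3 + |δ0| * |ε|^2 + |δ0|^2* |ε| ≤ (2*A^2 + 1 + A)* |ε|^3 := by
      nlinarith only [q0sq, mul_le_mul_of_nonneg_left he4le3 (mul_nonneg hA0 hA0),
        mul_le_mul_of_nonneg_right s1 (pow_nonneg (abs_nonneg ε) 2),
        mul_le_mul_of_nonneg_left he4le3 hA0,
        mul_le_mul_of_nonneg_right q0sq haε,
        mul_le_mul_of_nonneg_left he5le4 (mul_nonneg hA0 hA0)]
    have h3 : T1 * |δ0 + T2/T1*ε^2| ≤ C2* |ε|^3 := by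
      rw [← e1, e2]
      calc |T1*δ0 + T2*ε^2| ≤ CF*(|δ0|^2 + |ε|^3 + |δ0| * |ε|^2 + |δ0|^2* |ε|) := B1
      _ ≤ CF*((2*A^2 + 1 + A)* |ε|^3) := mul_le_mul_of_nonneg_left inner hCF
      _ = C2* |ε|^3 := by rw [hC2]; ring
    have e3 : C2* |ε|^3 = T1*(C2/T1* |ε|^3) := by field_simp
    rw [e3] at h3
    exact le_of_mul_le_mul_left h3 hT1
  -- step s4
  have qpsq : |δp|^2 ≤ A^2* |ε|^4 := by
    nlinarith only [mul_le_mul s2 s2 hap (mul_nonneg hA0 (pow_nonneg (abs_nonneg ε) 2))]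
  have qpcube : |δp|^3 ≤ A^3* |ε|^6 := by
    nlinarith only [mul_le_mul qpsq s2 hap (by positivity : (0:ℝ) ≤ A^2 * |ε|^4)]
  have inner2 : |ε|^5 + |δp| * |ε|^3 + |δp|^2* |ε|^2 + |δp|^3* |ε| ≤ (1 + A + A^2 + A^3)* |ε|^5 := by
    nlinarith only [mul_le_mul_of_nonneg_right s2 (pow_nonneg (abs_nonneg ε) 3),
      mul_le_mul_of_nonneg_right qpsq (pow_nonneg (abs_nonneg ε) 2),
      mul_le_mul_of_nonneg_left he6le5 (mul_nonneg hA0 hA0),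
      mul_le_mul_of_nonneg_right qpcube haε,
      mul_le_mul_of_nonneg_left he7le5 (mul_nonneg (mul_nonneg hA0 hA0) hA0)]
  have s4 : |2*Bp - (2*b2*δp*ε^2 + 2*b3*ε^4)| ≤ C3* |ε|^5 := by
    have e : 2*Bp - (2*b2*δp*ε^2 + 2*b3*ε^4) = 2*(Bp - (b2*δp*ε^2 + b3*ε^4)) := by ring
    rw [e, abs_mul]
    have e2 : |(2:ℝ)| = 2 := by norm_num
    rw [e2, hC3]
    calc 2 * |Bp - (b2*δp*ε^2 + b3*ε^4)| ≤ 2*(CB*(|ε|^5 + |δp| * |ε|^3 + |δp|^2* |ε|^2 + |δp|^3* |ε|)) := by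
          linarith [B3]
    _ ≤ 2*(CB*((1 + A + A^2 + A^3)* |ε|^5)) := by
          linarith [mul_le_mul_of_nonneg_left inner2 hCB]
    _ = 2*CB*(1 + A + A^2 + A^3)* |ε|^5 := by ring
  -- step s5a
  have u1 : |δp| + |δ0| + |ε| ≤ (2*A+1)* |ε| := by
    nlinarith only [s1, s2, mul_le_mul_of_nonneg_left he2le1 hA0]
  have s5a : |T1*(δp - δ0) + σ*(2*Bp)| ≤ L'* |ε| * |δp - δ0| := by
    have e : Fp - 0 - T1*(δp - δ0) = -(T1*(δp - δ0) + σ*(2*Bp)) := by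
      linear_combination hzero
    rw [e, abs_neg] at hlip
    calc |T1*(δp - δ0) + σ*(2*Bp)| ≤ L*(|δp| + |δ0| + |ε|)* |δp - δ0| := hlip
    _ ≤ L'* |ε| * |δp - δ0| := by
        rw [hL']
        nlinarith only [mul_le_mul_of_nonneg_right (mul_le_mul_of_nonneg_left u1 hL) haν]
  -- step s5b
  have habs2' : L'* |ε| * |δp - δ0| ≤ T1/2* |δp - δ0| := by
    have h1 : L'* |ε| * |δp - δ0| ≤ L'*ρ* |δp - δ0| :=
      mul_le_mul_of_nonneg_right (mul_le_mul_of_nonneg_left hε hL'0) haν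
    have h2 : L'*ρ* |δp - δ0| ≤ T1/2* |δp - δ0| := mul_le_mul_of_nonneg_right habs2 haν
    linarith
  have t5 : T1* |δp - δ0| ≤ |T1*(δp - δ0) + σ*(2*Bp)| + 2 * |Bp| := by
    have h := abs_sub_abs_le_abs_sub (T1*(δp - δ0)) (-(σ*(2*Bp)))
    rw [sub_neg_eq_add, abs_neg, abs_mul] at h
    have e : |σ*(2*Bp)| = 2 * |Bp| := by
      rw [abs_mul, hσ, one_mul, abs_mul]; norm_num
    rw [e, abs_of_pos hT1] at h
    linarith
  have h2Bp : 2 * |Bp| ≤ (2 * |b2| * A + 2 * |b3|)* |ε|^4 + C3* |ε|^5 := by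
    have h := abs_sub_abs_le_abs_sub (2*Bp) (2*Bp - (2*b2*δp*ε^2 + 2*b3*ε^4))
    have e : 2*Bp - (2*Bp - (2*b2*δp*ε^2 + 2*b3*ε^4)) = 2*b2*δp*ε^2 + 2*b3*ε^4 := by ring
    rw [e] at h
    have e2 : |2*Bp| = 2 * |Bp| := by rw [abs_mul]; norm_num
    rw [e2] at h
    have hX : |2*b2*δp*ε^2 + 2*b3*ε^4| ≤ 2 * |b2| * |δp| * |ε|^2 + 2 * |b3| * |ε|^4 := by
      calc |2*b2*δp*ε^2 + 2*b3*ε^4| ≤ |2*b2*δp*ε^2| + |2*b3*ε^4| := abs_add_le _ _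
      _ = 2 * |b2| * |δp| * |ε|^2 + 2 * |b3| * |ε|^4 := by
          simp only [abs_mul, abs_pow, abs_two]
    have hm : 2 * |b2| * |δp| * |ε|^2 ≤ 2 * |b2| * A* |ε|^4 := by
      nlinarith only [mul_le_mul_of_nonneg_left
        (mul_le_mul_of_nonneg_right s2 (pow_nonneg (abs_nonneg ε) 2)) hb2]
    nlinarith only [h, hX, hm, s4]
  have s5b : |δp - δ0| ≤ C4* |ε|^4 := by
    have hTA : T1*(C4* |ε|^4) = 2*(2 * |b2| * A + 2 * |b3| + C3)* |ε|^4 := by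
      rw [hC4]; field_simp; try ring
    have h2 : T1* |δp - δ0| ≤ T1*(C4* |ε|^4) := by
      rw [hTA]
      linarith [t5, s5a, habs2', h2Bp, mul_le_mul_of_nonneg_left he5le4 hC30]
    exact le_of_mul_le_mul_left h2 hT1
  -- step s6
  have s6 : |δp + T2/T1*ε^2| ≤ C5* |ε|^3 := by
    have h := abs_add_le (δ0 + T2/T1*ε^2) (δp - δ0)
    have e : (δ0 + T2/T1*ε^2) + (δp - δ0) = δp + T2/T1*ε^2 := by ring
    rw [e] at h
    rw [hC5]
    have := mul_le_mul_of_nonneg_left he4le3 hC40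
    nlinarith only [h, s3, s5b, this]
  -- step s7
  have s7 : |T1*(δp - δ0) + σ*(2*b3 - 2*b2*(T2/T1))*ε^4| ≤ C6* |ε|^5 := by
    set X := T1*(δp - δ0) + σ*(2*Bp) with hX
    set Y := σ*(2*Bp - (2*b2*δp*ε^2 + 2*b3*ε^4)) with hY
    set Z := σ*((2*b2)*(ε^2*(δp + T2/T1*ε^2))) with hZ
    have decomp : T1*(δp - δ0) + σ*(2*b3 - 2*b2*(T2/T1))*ε^4 = X - Y - Z := by
      rw [hX, hY, hZ]; ring
    have tri : |X - Y - Z| ≤ |X| + |Y| + |Z| := by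
      have h1 := abs_add_le (X - Y) (-Z)
      have h2 := abs_add_le X (-Y)
      rw [abs_neg] at h1 h2
      rw [← sub_eq_add_neg] at h1 h2
      linarith
    have hYb : |Y| ≤ C3* |ε|^5 := by
      rw [hY, abs_mul, hσ, one_mul]; exact s4
    have hZb : |Z| ≤ 2 * |b2| * C5* |ε|^5 := by
      rw [hZ]
      simp only [abs_mul, abs_pow, abs_two, hσ, one_mul]
      have h1 : |ε|^2 * |δp + T2/T1*ε^2| ≤ |ε|^2*(C5* |ε|^3) :=
        mul_le_mul_of_nonneg_left s6 (pow_nonneg (abs_nonneg ε) 2)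
      nlinarith only [mul_le_mul_of_nonneg_left h1 hb2]
    have hXb : |X| ≤ L'*C4* |ε|^5 := by
      calc |X| ≤ L'* |ε| * |δp - δ0| := s5a
      _ ≤ L'*C4* |ε|^5 := by
          nlinarith only [mul_le_mul_of_nonneg_left s5b (mul_nonneg hL'0 haε)]
    rw [decomp, hC6]
    linarith [tri, hXb, hYb, hZb]
  -- final division
  have e1 : T1*((δp - δ0) + σ*(2 / T1 * (b3 - b2 * T2 / T1))*ε^4)
      = T1*(δp - δ0) + σ*(2*b3 - 2*b2*(T2/T1))*ε^4 := by
    field_simp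
  have h2 : T1 * |(δp - δ0) + σ*(2 / T1 * (b3 - b2 * T2 / T1))*ε^4| ≤ T1*(C6/T1* |ε|^5) := by
    have e3 : T1*(C6/T1* |ε|^5) = C6* |ε|^5 := by field_simp
    rw [e3]
    have e4 : |T1*((δp - δ0) + σ*(2 / T1 * (b3 - b2 * T2 / T1))*ε^4)|
        = T1 * |(δp - δ0) + σ*(2 / T1 * (b3 - b2 * T2 / T1))*ε^4| := by
      rw [abs_mul, abs_of_pos hT1]
    rw [← e4, e1]
    exact s7
  exact le_of_mul_le_mul_left h2 hT1


theorem stmt7 (μb ωs δ₀ ε₀ : ℝ) (α β γ : ℝ → ℝ → ℝ) (α₁ α₂ β₁ β₂ β₃ γ₁ γ₂ : ℝ)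
    (hH : AssumptionH μb ωs δ₀ ε₀ α β γ α₁ α₂ β₁ β₂ β₃ γ₁ γ₂)
    (hβ₁ : β₁ = 0)
    (ε₁ : ℝ) (hε₁ : ε₁ ∈ Ioc (0 : ℝ) ε₀) (μ₀ μp μm : ℝ → ℝ)
    (hZ : ZeroCurves μb δ₀ α β γ ε₁ μ₀ μp μm) :
    ∃ ε₂ ∈ Ioc (0 : ℝ) ε₁, ∃ C > (0 : ℝ), ∀ ε : ℝ, |ε| < ε₂ →
      |(μp ε - μ₀ ε) + 2 / (α₁ + γ₁) * (β₃ - β₂ * (α₂ + γ₂) / (α₁ + γ₁)) * ε ^ 4| ≤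
        C * |ε| ^ 5 ∧
      |(μm ε - μ₀ ε) - 2 / (α₁ + γ₁) * (β₃ - β₂ * (α₂ + γ₂) / (α₁ + γ₁)) * ε ^ 4| ≤
        C * |ε| ^ 5 := by
  obtain ⟨α₀, γ₀, d, hd, e, he, C, hCpos, hα₀an, hγ₀an, hbd⟩ := hH.hexp
  have hT1 : 0 < α₁ + γ₁ := hH.hT₁
  have hde : 0 < d := hd.1
  have hee : 0 < e := he.1
  have hmd : 0 < min d e := lt_min hde hee
  -- expansion of T = α + γ in shifted coordinates
  have hFnear : ∀ δ ε : ℝ, |δ| < d → |ε| < e →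
      |α (μb + δ) ε + γ (μb + δ) ε - ((α₁ + γ₁)*δ + (α₂ + γ₂)*ε^2)|
        ≤ 2*C*(δ^2 + |ε|^3 + |δ| *ε^2 + δ^2* |ε|) := by
    intro δ ε hδ hε
    obtain ⟨h1, h2, h3, h4, h5⟩ := hbd δ ε hδ hε
    have key : α (μb + δ) ε + γ (μb + δ) ε - ((α₁ + γ₁)*δ + (α₂ + γ₂)*ε^2)
        = (α (μb + δ) ε - (-(α₀ δ) + α₂*ε^2)) + (γ (μb + δ) ε - (γ₀ δ + γ₂*ε^2))
          + (γ₀ δ - (ωs + γ₁*δ)) - (α₀ δ - (ωs - α₁*δ)) := by ring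
    have tri : |α (μb + δ) ε + γ (μb + δ) ε - ((α₁ + γ₁)*δ + (α₂ + γ₂)*ε^2)|
        ≤ |α (μb + δ) ε - (-(α₀ δ) + α₂*ε^2)| + |γ (μb + δ) ε - (γ₀ δ + γ₂*ε^2)|
          + |γ₀ δ - (ωs + γ₁*δ)| + |α₀ δ - (ωs - α₁*δ)| := by
      rw [key]
      have t1 := abs_add_le ((α (μb + δ) ε - (-(α₀ δ) + α₂*ε^2)) + (γ (μb + δ) ε - (γ₀ δ + γ₂*ε^2)))
        (γ₀ δ - (ωs + γ₁*δ))
      have t2 := abs_add_le (α (μb + δ) ε - (-(α₀ δ) + α₂*ε^2)) (γ (μb + δ) ε - (γ₀ δ + γ₂*ε^2))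
      have t3 := abs_sub_abs_le_abs_sub
        ((α (μb + δ) ε - (-(α₀ δ) + α₂*ε^2)) + (γ (μb + δ) ε - (γ₀ δ + γ₂*ε^2))
          + (γ₀ δ - (ωs + γ₁*δ)) - (α₀ δ - (ωs - α₁*δ))) (-(α₀ δ - (ωs - α₁*δ)))
      rw [sub_neg_eq_add, abs_neg] at t3
      have e3 : (α (μb + δ) ε - (-(α₀ δ) + α₂*ε^2)) + (γ (μb + δ) ε - (γ₀ δ + γ₂*ε^2))
          + (γ₀ δ - (ωs + γ₁*δ)) - (α₀ δ - (ωs - α₁*δ)) + (α₀ δ - (ωs - α₁*δ))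
          = (α (μb + δ) ε - (-(α₀ δ) + α₂*ε^2)) + (γ (μb + δ) ε - (γ₀ δ + γ₂*ε^2))
          + (γ₀ δ - (ωs + γ₁*δ)) := by ring
      rw [e3] at t3
      linarith
    have hε2 : |δ| *ε^2 ≥ 0 := by positivity
    have hε3 : (0:ℝ) ≤ |ε|^3 := by positivity
    have hd2ε : (0:ℝ) ≤ δ^2* |ε| := by positivity
    have hsq : (0:ℝ) ≤ δ^2 := sq_nonneg δ
    linarith [h1, h3, h4, h5, tri]
  -- expansion of β in shifted coordinates
  have hBnear : ∀ δ ε : ℝ, |δ| < d → |ε| < e →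
      |β (μb + δ) ε - (β₂*δ*ε^2 + β₃*ε^4)|
        ≤ C*(|ε|^5 + |δ| * |ε|^3 + δ^2*ε^2 + |δ|^3* |ε|) := by
    intro δ ε hδ hε
    obtain ⟨h1, h2, h3, h4, h5⟩ := hbd δ ε hδ hε
    rw [hβ₁, zero_mul, zero_add] at h2
    exact h2
  -- Lipschitz-type estimate from aux_key
  obtain ⟨r, hr0, hrle, L, hL0, hlip⟩ :=
    aux_key (fun p : ℝ × ℝ => α (μb + p.1) p.2 + γ (μb + p.1) p.2) (α₁ + γ₁) (2*C)
      (min d e) (by linarith) hmd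
      (by
        intro p hp
        simp only [Metric.mem_ball, Prod.dist_eq, Prod.fst_zero, Prod.snd_zero, Real.dist_eq,
          sub_zero, max_lt_iff, lt_min_iff] at hp
        have h1 : |p.1| < d := hp.1.1
        have h2 : |p.2| < e := hp.2.2
        have hm : (μb + p.1, p.2) ∈ Ioo (μb - δ₀) (μb + δ₀) ×ˢ Ioo (-ε₀) ε₀ := by
          have a1 := abs_lt.mp h1
          have a2 := abs_lt.mp h2
          exact Set.mem_prod.mpr ⟨Set.mem_Ioo.mpr
            ⟨by show μb - δ₀ < μb + p.1; linarith [hd.2],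
             by show μb + p.1 < μb + δ₀; linarith [hd.2]⟩,
            Set.mem_Ioo.mpr
            ⟨by show -ε₀ < p.2; linarith [he.2],
             by show p.2 < ε₀; linarith [he.2]⟩⟩
        have hshift : AnalyticAt ℝ (fun q : ℝ × ℝ => (μb + q.1, q.2)) p :=
          (analyticAt_const.add analyticAt_fst).prod analyticAt_snd
        have hga : AnalyticAt ℝ (fun p : ℝ × ℝ => α p.1 p.2)
            ((fun q : ℝ × ℝ => (μb + q.1, q.2)) p) := hH.hα_an _ hm
        have hgg : AnalyticAt ℝ (fun p : ℝ × ℝ => γ p.1 p.2)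
            ((fun q : ℝ × ℝ => (μb + q.1, q.2)) p) := hH.hγ_an _ hm
        exact (AnalyticAt.comp (f := fun q : ℝ × ℝ => (μb + q.1, q.2)) (x := p) hga hshift).add
          (AnalyticAt.comp (f := fun q : ℝ × ℝ => (μb + q.1, q.2)) (x := p) hgg hshift))
      (by
        intro δ hδ
        have h := hFnear δ 0 (lt_of_lt_of_le hδ (min_le_left _ _)) (by simpa using hee)
        show |α (μb + δ) 0 + γ (μb + δ) 0 - (α₁ + γ₁)*δ| ≤ 2*C*δ^2
        have e0 : (α₁ + γ₁)*δ + (α₂ + γ₂)*(0:ℝ)^2 = (α₁ + γ₁)*δ := by ring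
        have e1 : δ^2 + |(0:ℝ)|^3 + |δ| *(0:ℝ)^2 + δ^2* |(0:ℝ)| = δ^2 := by
          simp [abs_zero]
        rw [e0, e1] at h
        exact h)
  -- constants
  set A := 2/(α₁ + γ₁) * (|α₂ + γ₂| + 2*C + 2 * |β₃| + 2*C) with hAdef
  set C2 := 2*C * (2*A^2 + 1 + A) with hC2def
  set C3 := 2*C*(1 + A + A^2 + A^3) with hC3def
  set L' := L*(2*A+1) with hL'def
  set C4 := 2/(α₁ + γ₁) * (2 * |β₂| * A + 2 * |β₃| + C3) with hC4def
  set C5 := C2/(α₁ + γ₁) + C4 with hC5def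
  set C6 := L'*C4 + C3 + 2 * |β₂| * C5 with hC6def
  have hA0 : 0 ≤ A := by
    rw [hAdef]
    have : (0:ℝ) ≤ |α₂ + γ₂| + 2*C + 2 * |β₃| + 2*C := by
      have := abs_nonneg (α₂ + γ₂); have := abs_nonneg β₃; linarith
    positivity
  have hL'0 : 0 ≤ L' := by
    rw [hL'def]; have : (0:ℝ) ≤ 2*A+1 := by linarith
    exact mul_nonneg hL0.le this
  have hC30 : 0 ≤ C3 := by
    rw [hC3def]
    have h1 : (0:ℝ) ≤ 1 + A + A^2 + A^3 := by positivity
    have : (0:ℝ) ≤ 2*C := by linarith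
    exact mul_nonneg this h1
  have hC40 : 0 ≤ C4 := by
    rw [hC4def]
    have h1 : (0:ℝ) ≤ 2 * |β₂| * A + 2 * |β₃| + C3 := by
      have := abs_nonneg β₂; have := abs_nonneg β₃
      have : (0:ℝ) ≤ 2 * |β₂| * A := by positivity
      linarith [abs_nonneg β₃]
    have h2 : (0:ℝ) ≤ 2/(α₁ + γ₁) := by positivity
    exact mul_nonneg h2 h1
  have hC20 : 0 ≤ C2 := by
    rw [hC2def]
    have h1 : (0:ℝ) ≤ 2*A^2 + 1 + A := by positivity
    have : (0:ℝ) ≤ 2*C := by linarith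
    exact mul_nonneg this h1
  have hC50 : 0 ≤ C5 := by
    rw [hC5def]
    have : (0:ℝ) ≤ C2/(α₁ + γ₁) := by positivity
    linarith
  have hC60 : 0 ≤ C6 := by
    rw [hC6def]
    have h1 : (0:ℝ) ≤ L'*C4 := mul_nonneg hL'0 hC40
    have h2 : (0:ℝ) ≤ 2 * |β₂| * C5 := by
      have := abs_nonneg β₂; positivity
    linarith
  -- choice of ρ
  set S1 := 3*(2*C) + 2 * |β₂| + 6*C with hS1def
  have hS10 : 0 ≤ S1 := by
    rw [hS1def]; have := abs_nonneg β₂; linarith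
  set ρ := min 1 (min (r/2) (min ((α₁ + γ₁)/2 / (S1 + 1)) ((α₁ + γ₁)/2 / (L' + 1)))) with hρdef
  have hρ0 : 0 < ρ := by
    rw [hρdef]
    apply lt_min one_pos
    apply lt_min (by linarith)
    apply lt_min
    · exact div_pos (by linarith) (by linarith)
    · exact div_pos (by linarith) (by linarith)
  have hρ1 : ρ ≤ 1 := min_le_left _ _
  have hρr : ρ < r := by
    calc ρ ≤ r/2 := le_trans (min_le_right _ _) (min_le_left _ _)
    _ < r := by linarith
  have habs1 : (3*(2*C) + 2 * |β₂| + 6*C)*ρ ≤ (α₁ + γ₁)/2 := by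
    have hle : ρ ≤ (α₁ + γ₁)/2 / (S1 + 1) :=
      le_trans (min_le_right _ _) (le_trans (min_le_right _ _) (min_le_left _ _))
    have hS11 : (0:ℝ) < S1 + 1 := by linarith
    have h2 : S1*ρ ≤ S1*((α₁ + γ₁)/2 / (S1 + 1)) := mul_le_mul_of_nonneg_left hle hS10
    have h3 : S1*((α₁ + γ₁)/2 / (S1 + 1)) ≤ (α₁ + γ₁)/2 := by
      rw [mul_div_assoc', div_le_iff₀ hS11]; nlinarith
    calc (3*(2*C) + 2 * |β₂| + 6*C)*ρ = S1*ρ := by rw [hS1def]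
    _ ≤ (α₁ + γ₁)/2 := le_trans h2 h3
  have habs2 : L'*ρ ≤ (α₁ + γ₁)/2 := by
    have hle : ρ ≤ (α₁ + γ₁)/2 / (L' + 1) :=
      le_trans (min_le_right _ _) (le_trans (min_le_right _ _) (min_le_right _ _))
    have hL1 : (0:ℝ) < L' + 1 := by linarith
    have h2 : L'*ρ ≤ L'*((α₁ + γ₁)/2 / (L' + 1)) := mul_le_mul_of_nonneg_left hle hL'0
    have h3 : L'*((α₁ + γ₁)/2 / (L' + 1)) ≤ (α₁ + γ₁)/2 := by
      rw [mul_div_assoc', div_le_iff₀ hL1]; nlinarith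
    linarith
  -- values at ε = 0
  have h0mem : (0:ℝ) ∈ Ioo (-ε₁) ε₁ := ⟨by linarith [hε₁.1], hε₁.1⟩
  have hμbmem : μb ∈ Ioo (μb - δ₀) (μb + δ₀) := ⟨by linarith [hH.hδ₀], by linarith [hH.hδ₀]⟩
  have hF00 : α μb 0 + γ μb 0 = 0 := by
    have h := hFnear 0 0 (by simpa using hde) (by simpa using hee)
    norm_num at h
    exact h
  have hB00 : β μb 0 = 0 := by
    have h := hBnear 0 0 (by simpa using hde) (by simpa using hee)
    norm_num at h
    exact h
  have hμ00 : μb = μ₀ 0 := ((hZ.hT μb hμbmem 0 h0mem).1).mp hF00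
  have hμp0 : μb = μp 0 := ((hZ.hdp μb hμbmem 0 h0mem).1).mp (by rw [hB00]; linarith)
  have hμm0 : μb = μm 0 := ((hZ.hdm μb hμbmem 0 h0mem).1).mp (by rw [hB00]; linarith)
  -- continuity moduli
  obtain ⟨η0, hη00, hη0⟩ := Metric.continuousAt_iff.mp ((hZ.hμ₀_an 0 h0mem).continuousAt) ρ hρ0
  obtain ⟨ηp, hηp0, hηp⟩ := Metric.continuousAt_iff.mp ((hZ.hμp_an 0 h0mem).continuousAt) ρ hρ0
  obtain ⟨ηm, hηm0, hηm⟩ := Metric.continuousAt_iff.mp ((hZ.hμm_an 0 h0mem).continuousAt) ρ hρ0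
  -- final threshold and constant
  have hC6T : (0:ℝ) ≤ C6/(α₁ + γ₁) := div_nonneg hC60 hT1.le
  clear_value A C2 C3 L' C4 C5 C6 S1 ρ
  refine ⟨min (min η0 (min ηp ηm)) (min ρ ε₁),
    ⟨lt_min (lt_min hη00 (lt_min hηp0 hηm0)) (lt_min hρ0 hε₁.1),
    le_trans (min_le_right _ _) (min_le_right _ _)⟩,
    C6/(α₁ + γ₁) + 1, by linarith, ?_⟩
  intro ε hε
  have hερ : |ε| < ρ := lt_of_lt_of_le hε (le_trans (min_le_right _ _) (min_le_left _ _))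
  have hεε₁ : |ε| < ε₁ := lt_of_lt_of_le hε (le_trans (min_le_right _ _) (min_le_right _ _))
  have hεmem : ε ∈ Ioo (-ε₁) ε₁ := by
    have := abs_lt.mp hεε₁; exact ⟨this.1, this.2⟩
  have hεd : |ε| < e := by
    have : ρ < min d e := lt_of_lt_of_le hρr hrle
    exact lt_of_lt_of_le (lt_trans hερ this) (min_le_right _ _)
  -- distances of the curves to μb
  have hδ0ρ : |μ₀ ε - μb| ≤ ρ := by
    have h := hη0 (show dist ε 0 < η0 by
      rw [Real.dist_eq, sub_zero]
      exact lt_of_lt_of_le hε (le_trans (min_le_left _ _) (min_le_left _ _)))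
    rw [← hμ00, Real.dist_eq] at h
    exact h.le
  have hδpρ : |μp ε - μb| ≤ ρ := by
    have h := hηp (show dist ε 0 < ηp by
      rw [Real.dist_eq, sub_zero]
      exact lt_of_lt_of_le hε (le_trans (min_le_left _ _)
        (le_trans (min_le_right _ _) (min_le_left _ _))))
    rw [← hμp0, Real.dist_eq] at h
    exact h.le
  have hδmρ : |μm ε - μb| ≤ ρ := by
    have h := hηm (show dist ε 0 < ηm by
      rw [Real.dist_eq, sub_zero]
      exact lt_of_lt_of_le hε (le_trans (min_le_left _ _)
        (le_trans (min_le_right _ _) (min_le_right _ _))))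
    rw [← hμm0, Real.dist_eq] at h
    exact h.le
  have hρd : ρ < d := lt_of_lt_of_le (lt_of_lt_of_le hρr hrle) (min_le_left _ _)
  have hrwp : μb + (μp ε - μb) = μp ε := by ring
  have hrw0 : μb + (μ₀ ε - μb) = μ₀ ε := by ring
  have hrwm : μb + (μm ε - μb) = μm ε := by ring
  -- zero equations
  have hz0 : α (μ₀ ε) ε + γ (μ₀ ε) ε = 0 :=
    ((hZ.hT (μ₀ ε) (hZ.hmaps₀ ε hεmem) ε hεmem).1).mpr rfl
  have hzp : α (μp ε) ε + γ (μp ε) ε + 2*β (μp ε) ε = 0 :=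
    ((hZ.hdp (μp ε) (hZ.hmapsp ε hεmem) ε hεmem).1).mpr rfl
  have hzm : α (μm ε) ε + γ (μm ε) ε - 2*β (μm ε) ε = 0 :=
    ((hZ.hdm (μm ε) (hZ.hmapsm ε hεmem) ε hεmem).1).mpr rfl
  -- F-bounds at the three points
  have hF0b := hFnear (μ₀ ε - μb) ε (lt_of_le_of_lt hδ0ρ hρd) hεd
  rw [hrw0, hz0] at hF0b
  have hFpb := hFnear (μp ε - μb) ε (lt_of_le_of_lt hδpρ hρd) hεd
  rw [hrwp] at hFpb
  have hFmb := hFnear (μm ε - μb) ε (lt_of_le_of_lt hδmρ hρd) hεd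
  rw [hrwm] at hFmb
  have hBpb := hBnear (μp ε - μb) ε (lt_of_le_of_lt hδpρ hρd) hεd
  rw [hrwp] at hBpb
  have hBmb := hBnear (μm ε - μb) ε (lt_of_le_of_lt hδmρ hρd) hεd
  rw [hrwm] at hBmb
  -- Lipschitz bounds
  have hlipp : |(α (μb + (μp ε - μb)) ε + γ (μb + (μp ε - μb)) ε)
      - (α (μb + (μ₀ ε - μb)) ε + γ (μb + (μ₀ ε - μb)) ε)
      - (α₁ + γ₁)*((μp ε - μb) - (μ₀ ε - μb))|
      ≤ L*(|μp ε - μb| + |μ₀ ε - μb| + |ε|)* |(μp ε - μb) - (μ₀ ε - μb)| :=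
    hlip _ _ _ (lt_of_le_of_lt hδpρ hρr) (lt_of_le_of_lt hδ0ρ hρr) (lt_trans hερ hρr)
  rw [hrwp, hrw0, hz0] at hlipp
  have hlipm : |(α (μb + (μm ε - μb)) ε + γ (μb + (μm ε - μb)) ε)
      - (α (μb + (μ₀ ε - μb)) ε + γ (μb + (μ₀ ε - μb)) ε)
      - (α₁ + γ₁)*((μm ε - μb) - (μ₀ ε - μb))|
      ≤ L*(|μm ε - μb| + |μ₀ ε - μb| + |ε|)* |(μm ε - μb) - (μ₀ ε - μb)| :=
    hlip _ _ _ (lt_of_le_of_lt hδmρ hρr) (lt_of_le_of_lt hδ0ρ hρr) (lt_trans hερ hρr)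
  rw [hrwm, hrw0, hz0] at hlipm
  constructor
  · -- plus case
    have est := aux_est (α₁ + γ₁) (α₂ + γ₂) β₂ β₃ (2*C) C L ρ A C2 C3 L' C4 C5 C6
      hT1 (by linarith) (by linarith) hL0.le hρ0 hρ1 hAdef hC2def hC3def hL'def hC4def
      hC5def hC6def habs1 habs2
      1 (μ₀ ε - μb) (μp ε - μb) ε (α (μp ε) ε + γ (μp ε) ε) (β (μp ε) ε)
      (by norm_num)
      hδ0ρ hδpρ hερ.le
      (by linarith)
      hFpb hF0b hBpb hlipp
    have e1 : ((μp ε - μb) - (μ₀ ε - μb))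
        + 1 * (2 / (α₁ + γ₁) * (β₃ - β₂ * (α₂ + γ₂) / (α₁ + γ₁))) * ε ^ 4
        = (μp ε - μ₀ ε) + 2 / (α₁ + γ₁) * (β₃ - β₂ * (α₂ + γ₂) / (α₁ + γ₁)) * ε ^ 4 := by
      ring
    rw [e1] at est
    have hpos : (0:ℝ) ≤ |ε|^5 := by positivity
    calc |(μp ε - μ₀ ε) + 2 / (α₁ + γ₁) * (β₃ - β₂ * (α₂ + γ₂) / (α₁ + γ₁)) * ε ^ 4|
        ≤ C6/(α₁ + γ₁) * |ε|^5 := est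
    _ ≤ (C6/(α₁ + γ₁) + 1) * |ε|^5 := by linarith only [hpos]
  · -- minus case
    have est := aux_est (α₁ + γ₁) (α₂ + γ₂) β₂ β₃ (2*C) C L ρ A C2 C3 L' C4 C5 C6
      hT1 (by linarith) (by linarith) hL0.le hρ0 hρ1 hAdef hC2def hC3def hL'def hC4def
      hC5def hC6def habs1 habs2
      (-1) (μ₀ ε - μb) (μm ε - μb) ε (α (μm ε) ε + γ (μm ε) ε) (β (μm ε) ε)
      (by norm_num)
      hδ0ρ hδmρ hερ.le
      (by linarith)
      hFmb hF0b hBmb hlipm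
    have e1 : ((μm ε - μb) - (μ₀ ε - μb))
        + (-1) * (2 / (α₁ + γ₁) * (β₃ - β₂ * (α₂ + γ₂) / (α₁ + γ₁))) * ε ^ 4
        = (μm ε - μ₀ ε) - 2 / (α₁ + γ₁) * (β₃ - β₂ * (α₂ + γ₂) / (α₁ + γ₁)) * ε ^ 4 := by
      ring
    rw [e1] at est
    have hpos : (0:ℝ) ≤ |ε|^5 := by positivity
    calc |(μm ε - μ₀ ε) - 2 / (α₁ + γ₁) * (β₃ - β₂ * (α₂ + γ₂) / (α₁ + γ₁)) * ε ^ 4|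
        ≤ C6/(α₁ + γ₁) * |ε|^5 := est
    _ ≤ (C6/(α₁ + γ₁) + 1) * |ε|^5 := by linarith only [hpos]
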